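/- Assume (V0′), (F0), (F1) and (WN). Then for all u ∈ E and t ≥ 0: Φ(u) ≥ (t²/2)‖u‖₀² − ∫_{ℝᴺ} F(x, t u^{ℱ+}) dx + ((1−t²)/2)⟨Φ′(u), u⟩ + t²⟨Φ′(u), u^{ℱ−}⟩ + (t²/2)∫_{ℝᴺ} V₁(x)[(u^{ℱ+})² − (u^{ℱ−})²] dx. -/

import Mathlib

open MeasureTheory Filter Topology RealInnerProductSpace

/-- `Fint f x t = F(x,t) = ∫₀ᵗ f(x,s) ds`. -/
noncomputable def Fint {N : ℕ} (f : EuclideanSpace ℝ (Fin N) → ℝ → ℝ)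
    (x : EuclideanSpace ℝ (Fin N)) (t : ℝ) : ℝ :=
  ∫ s in (0:ℝ)..t, f x s

section PointwiseAux

open intervalIntegral

variable {g : ℝ → ℝ}

private lemma slope_above_pos
    (hmono : ∀ s₁ s₂ : ℝ, s₁ ≤ s₂ → (s₂ < 0 ∨ 0 < s₁) → g s₁ / |s₁| ≤ g s₂ / |s₂|)
    {τ s : ℝ} (hτ : 0 < τ) (hs : τ ≤ s) : g τ / τ * s ≤ g s := by
  have hs0 : 0 < s := lt_of_lt_of_le hτ hs
  have h := hmono τ s hs (Or.inr hτ)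
  rw [abs_of_pos hτ, abs_of_pos hs0] at h
  calc g τ / τ * s ≤ g s / s * s := mul_le_mul_of_nonneg_right h hs0.le
    _ = g s := div_mul_cancel₀ _ hs0.ne'

private lemma slope_below_pos
    (hmono : ∀ s₁ s₂ : ℝ, s₁ ≤ s₂ → (s₂ < 0 ∨ 0 < s₁) → g s₁ / |s₁| ≤ g s₂ / |s₂|)
    {τ s : ℝ} (hs : 0 < s) (hsτ : s ≤ τ) : g s ≤ g τ / τ * s := by
  have hτ0 : 0 < τ := lt_of_lt_of_le hs hsτ
  have h := hmono s τ hsτ (Or.inr hs)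
  rw [abs_of_pos hs, abs_of_pos hτ0] at h
  calc g s = g s / s * s := (div_mul_cancel₀ _ hs.ne').symm
    _ ≤ g τ / τ * s := mul_le_mul_of_nonneg_right h hs.le

private lemma slope_above_neg
    (hmono : ∀ s₁ s₂ : ℝ, s₁ ≤ s₂ → (s₂ < 0 ∨ 0 < s₁) → g s₁ / |s₁| ≤ g s₂ / |s₂|)
    {τ s : ℝ} (hτs : τ ≤ s) (hs : s < 0) : g τ / τ * s ≤ g s := by
  have hτ0 : τ < 0 := lt_of_le_of_lt hτs hs
  have h := hmono τ s hτs (Or.inl hs)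
  rw [abs_of_neg hτ0, abs_of_neg hs] at h
  have h2 := mul_le_mul_of_nonneg_right h (neg_nonneg.mpr hs.le)
  rw [div_mul_cancel₀ _ (by simpa using hs.ne)] at h2
  -- h2 : g τ / -τ * -s ≤ g s
  have : g τ / -τ * -s = g τ / τ * s := by
    rw [div_neg, neg_mul_neg]
  linarith [this ▸ h2]

private lemma slope_below_neg
    (hmono : ∀ s₁ s₂ : ℝ, s₁ ≤ s₂ → (s₂ < 0 ∨ 0 < s₁) → g s₁ / |s₁| ≤ g s₂ / |s₂|)
    {τ s : ℝ} (hsτ : s ≤ τ) (hτ : τ < 0) : g s ≤ g τ / τ * s := by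
  have hs0 : s < 0 := lt_of_le_of_lt hsτ hτ
  have h := hmono s τ hsτ (Or.inl hτ)
  rw [abs_of_neg hs0, abs_of_neg hτ] at h
  have h2 := mul_le_mul_of_nonneg_right h (neg_nonneg.mpr hs0.le)
  rw [div_mul_cancel₀ _ (by simpa using hs0.ne)] at h2
  -- h2 : g s ≤ g τ / -τ * -s
  have : g τ / -τ * -s = g τ / τ * s := by
    rw [div_neg, neg_mul_neg]
  linarith [this ▸ h2]

private lemma chord_ineq (hgc : Continuous g)
    (hmono : ∀ s₁ s₂ : ℝ, s₁ ≤ s₂ → (s₂ < 0 ∨ 0 < s₁) → g s₁ / |s₁| ≤ g s₂ / |s₂|)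
    {τ w : ℝ} (h : 0 < τ ∧ 0 < w ∨ τ < 0 ∧ w < 0) :
    g τ / τ * ((w ^ 2 - τ ^ 2) / 2)
      ≤ (∫ s in (0:ℝ)..w, g s) - ∫ s in (0:ℝ)..τ, g s := by
  have hint : ∀ a b : ℝ, IntervalIntegrable g volume a b := fun a b =>
    hgc.intervalIntegrable a b
  have hlint : ∀ a b : ℝ, IntervalIntegrable (fun s => g τ / τ * s) volume a b := fun a b =>
    (continuous_const.mul continuous_id).intervalIntegrable a b
  have hdiff : (∫ s in (0:ℝ)..w, g s) - ∫ s in (0:ℝ)..τ, g s = ∫ s in τ..w, g s :=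
    integral_interval_sub_left (hint 0 w) (hint 0 τ)
  have hlin : ∀ a b : ℝ, (∫ s in a..b, g τ / τ * s) = g τ / τ * ((b ^ 2 - a ^ 2) / 2) := by
    intro a b
    rw [intervalIntegral.integral_const_mul, integral_id]
  rw [hdiff]
  rcases le_total τ w with hτw | hwτ
  · have hpt : ∀ s ∈ Set.Icc τ w, g τ / τ * s ≤ g s := by
      intro s hs
      rcases h with ⟨hτ, _⟩ | ⟨_, hw⟩
      · exact slope_above_pos hmono hτ hs.1
      · exact slope_above_neg hmono hs.1 (lt_of_le_of_lt hs.2 hw)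
    calc g τ / τ * ((w ^ 2 - τ ^ 2) / 2) = ∫ s in τ..w, g τ / τ * s := (hlin τ w).symm
      _ ≤ ∫ s in τ..w, g s := integral_mono_on hτw (hlint τ w) (hint τ w) hpt
  · have hpt : ∀ s ∈ Set.Icc w τ, g s ≤ g τ / τ * s := by
      intro s hs
      rcases h with ⟨hτ, hw⟩ | ⟨hτ, _⟩
      · exact slope_below_pos hmono (lt_of_lt_of_le hw hs.1) hs.2
      · exact slope_below_neg hmono hs.2 hτ
    have h1 : (∫ s in w..τ, g s) ≤ g τ / τ * ((τ ^ 2 - w ^ 2) / 2) := by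
      calc (∫ s in w..τ, g s) ≤ ∫ s in w..τ, g τ / τ * s :=
            integral_mono_on hwτ (hint w τ) (hlint w τ) hpt
        _ = g τ / τ * ((τ ^ 2 - w ^ 2) / 2) := hlin w τ
    rw [integral_symm]
    nlinarith [h1]

private lemma Fg_nonneg (hgc : Continuous g) (hg0 : g 0 = 0)
    (hpos : ∀ s : ℝ, 0 < s → 0 ≤ g s) (hneg : ∀ s : ℝ, s < 0 → g s ≤ 0)
    (w : ℝ) : 0 ≤ ∫ s in (0:ℝ)..w, g s := by
  rcases lt_trichotomy w 0 with hw | hw | hw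
  · rw [integral_symm]
    have h1 : (∫ s in w..(0:ℝ), g s) ≤ ∫ s in w..(0:ℝ), (0:ℝ) := by
      apply integral_mono_on hw.le (hgc.intervalIntegrable _ _)
        (continuous_const.intervalIntegrable _ _)
      intro s hs
      rcases eq_or_lt_of_le hs.2 with h | h
      · rw [h, hg0]
      · exact hneg s h
    simp only [intervalIntegral.integral_zero] at h1
    linarith
  · simp [hw]
  · apply intervalIntegral.integral_nonneg hw.le
    intro s hs
    rcases eq_or_lt_of_le hs.1 with h | h
    · rw [← h, hg0]
    · exact hpos s h

private lemma Fg_le_half (hgc : Continuous g) (hg0 : g 0 = 0)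
    (hmono : ∀ s₁ s₂ : ℝ, s₁ ≤ s₂ → (s₂ < 0 ∨ 0 < s₁) → g s₁ / |s₁| ≤ g s₂ / |s₂|)
    (τ : ℝ) : (∫ s in (0:ℝ)..τ, g s) ≤ τ * g τ / 2 := by
  have hint : ∀ a b : ℝ, IntervalIntegrable g volume a b := fun a b =>
    hgc.intervalIntegrable a b
  have hlint : ∀ a b : ℝ, IntervalIntegrable (fun s => g τ / τ * s) volume a b := fun a b =>
    (continuous_const.mul continuous_id).intervalIntegrable a b
  have hlin : ∀ a b : ℝ, (∫ s in a..b, g τ / τ * s) = g τ / τ * ((b ^ 2 - a ^ 2) / 2) := by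
    intro a b
    rw [intervalIntegral.integral_const_mul, integral_id]
  rcases lt_trichotomy τ 0 with hτ | hτ | hτ
  · rw [integral_symm]
    have hpt : ∀ s ∈ Set.Icc τ (0:ℝ), g τ / τ * s ≤ g s := by
      intro s hs
      rcases eq_or_lt_of_le hs.2 with h | h
      · rw [h, hg0, mul_zero]
      · exact slope_above_neg hmono hs.1 h
    have h1 : (∫ s in τ..(0:ℝ), g τ / τ * s) ≤ ∫ s in τ..(0:ℝ), g s :=
      integral_mono_on hτ.le (hlint τ 0) (hint τ 0) hpt
    rw [hlin] at h1
    have : g τ / τ * ((0 ^ 2 - τ ^ 2) / 2) = -(τ * g τ / 2) := by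
      field_simp [hτ.ne]
      ring
    linarith [this ▸ h1]
  · simp [hτ]
  · have hpt : ∀ s ∈ Set.Icc (0:ℝ) τ, g s ≤ g τ / τ * s := by
      intro s hs
      rcases eq_or_lt_of_le hs.1 with h | h
      · rw [← h, hg0, mul_zero]
      · exact slope_below_pos hmono h hs.2
    have h1 : (∫ s in (0:ℝ)..τ, g s) ≤ ∫ s in (0:ℝ)..τ, g τ / τ * s :=
      integral_mono_on hτ.le (hint 0 τ) (hlint 0 τ) hpt
    rw [hlin] at h1
    have : g τ / τ * ((τ ^ 2 - 0 ^ 2) / 2) = τ * g τ / 2 := by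
      field_simp [hτ.ne']
      ring
    linarith [this ▸ h1]

/-- Key pointwise inequality under the weak Nehari monotonicity condition. -/
private lemma key_pointwise (hgc : Continuous g) (hg0 : g 0 = 0)
    (hpos : ∀ s : ℝ, 0 < s → 0 ≤ g s) (hneg : ∀ s : ℝ, s < 0 → g s ≤ 0)
    (hmono : ∀ s₁ s₂ : ℝ, s₁ ≤ s₂ → (s₂ < 0 ∨ 0 < s₁) → g s₁ / |s₁| ≤ g s₂ / |s₂|)
    (t w τ : ℝ) (ht : 0 ≤ t) :
    0 ≤ (∫ s in (0:ℝ)..w, g s) - (∫ s in (0:ℝ)..τ, g s)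
      + ((t ^ 2 + 1) / 2 * τ - t * w) * g τ := by
  have hFw := Fg_nonneg hgc hg0 hpos hneg w
  have hFτ := Fg_le_half hgc hg0 hmono τ
  by_cases hgτ : g τ = 0
  · simp only [hgτ, mul_zero, zero_div, add_zero] at hFτ ⊢
    linarith
  · have hτ0 : τ ≠ 0 := fun h => hgτ (h ▸ hg0)
    have hτg : 0 < τ * g τ := by
      rcases lt_or_gt_of_ne hτ0 with h | h
      · have := hneg τ h
        have hne : g τ < 0 := lt_of_le_of_ne this hgτ
        exact mul_pos_of_neg_of_neg h hne
      · have := hpos τ h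
        have hne : 0 < g τ := lt_of_le_of_ne this (Ne.symm hgτ)
        exact mul_pos h hne
    rcases le_or_gt (w * g τ) 0 with hw | hw
    · have h1 : 0 ≤ t ^ 2 * (τ * g τ) := mul_nonneg (sq_nonneg t) hτg.le
      have h2 : t * (w * g τ) ≤ 0 := mul_nonpos_of_nonneg_of_nonpos ht hw
      nlinarith
    · -- w and τ have the same (strict) sign
      have hsame : 0 < τ ∧ 0 < w ∨ τ < 0 ∧ w < 0 := by
        rcases lt_or_gt_of_ne hτ0 with h | h
        · have hgτn : g τ < 0 := lt_of_le_of_ne (hneg τ h) hgτ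
          right
          refine ⟨h, ?_⟩
          by_contra hwp
          push_neg at hwp
          nlinarith
        · have hgτp : 0 < g τ := lt_of_le_of_ne (hpos τ h) (Ne.symm hgτ)
          left
          refine ⟨h, ?_⟩
          by_contra hwp
          push_neg at hwp
          nlinarith
      have hc := chord_ineq hgc hmono hsame
      have hq : 0 < g τ / τ := by
        rcases hsame with ⟨h, _⟩ | ⟨h, _⟩
        · exact div_pos (by nlinarith) h
        · exact div_pos_of_neg_of_neg (by nlinarith) h
      have hkey : ((t ^ 2 + 1) / 2 * τ - t * w) * g τ
          = g τ / τ * ((t ^ 2 + 1) / 2 * τ ^ 2 - t * w * τ) := by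
        field_simp
      have hsq : 0 ≤ g τ / τ * (w - t * τ) ^ 2 := mul_nonneg hq.le (sq_nonneg _)
      rw [hkey]
      nlinarith [hc, hsq]

end PointwiseAux
set_option maxHeartbeats 1000000 in
theorem energy_lower_bound_positive_part
    {E : Type*} [NormedAddCommGroup E] [InnerProductSpace ℝ E] [CompleteSpace E]
    {N : ℕ} (hN : 3 ≤ N)
    -- `E = H¹(ℝᴺ)`, realized as a Hilbert space of functions on `ℝᴺ` via `ι`,
    -- with (weak) gradient `grad`
    (ι : E →ₗ[ℝ] (EuclideanSpace ℝ (Fin N) → ℝ)) (hι : Function.Injective ι)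
    (grad : E →ₗ[ℝ] (EuclideanSpace ℝ (Fin N) → EuclideanSpace ℝ (Fin N)))
    (hmem2 : ∀ u : E, MemLp (ι u) 2 (volume : Measure (EuclideanSpace ℝ (Fin N))))
    (hmemg : ∀ u : E, MemLp (fun x => ‖grad u x‖) 2 (volume : Measure (EuclideanSpace ℝ (Fin N))))
    -- the spectral decomposition of `E` into the negative and positive spectral
    -- subspaces of the Schrödinger operator, with the associated projections
    (Em Ep : Submodule ℝ E) (hEmc : IsClosed (Em : Set E)) (hEpc : IsClosed (Ep : Set E))
    (Pm Pp : E →L[ℝ] E)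
    (hPm : ∀ u, Pm u ∈ Em) (hPp : ∀ u, Pp u ∈ Ep) (hPsum : ∀ u, Pm u + Pp u = u)
    (hPmId : ∀ u ∈ Em, Pm u = u) (hPpId : ∀ u ∈ Ep, Pp u = u)
    (horth : ∀ v ∈ Em, ∀ w ∈ Ep, ⟪v, w⟫ = 0)
    -- (V0'): `V = V₀ + V₁`, `V₀` continuous and bounded, `V₁` continuous vanishing
    -- at infinity; the norm `‖·‖₀` of `E` is the form norm of `A₀ = -Δ + V₀`, whose
    -- quadratic form is positive on `Ep = E^{ℱ+}` and negative on `Em = E^{ℱ-}`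
    (V₀ V₁ : EuclideanSpace ℝ (Fin N) → ℝ)
    (hV₀c : Continuous V₀) (hV₀b : ∃ M, ∀ x, |V₀ x| ≤ M) (hV₁c : Continuous V₁)
    (hV₁0 : Tendsto V₁ (cocompact (EuclideanSpace ℝ (Fin N))) (𝓝 0))
    (hform : ∀ u : E,
      (∫ x, (‖grad u x‖ ^ 2 + V₀ x * (ι u x) ^ 2)) = ‖Pp u‖ ^ 2 - ‖Pm u‖ ^ 2)
    -- (F0) and (F1)
    (f : EuclideanSpace ℝ (Fin N) → ℝ → ℝ)
    (hfc : Continuous (Function.uncurry f))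
    (p : ℝ) (hp1 : 2 < p) (hp2 : p < 2 * (N:ℝ) / ((N:ℝ) - 2))
    (hF0 : ∃ C₀ > 0, ∀ x t, |f x t| ≤ C₀ * (1 + |t| ^ (p - 1)))
    (hF1 : ∀ ε > 0, ∃ δ > 0, ∀ x t, |t| ≤ δ → |f x t| ≤ ε * |t|)
    -- (WN): `t ↦ f(x,t)/|t|` is nondecreasing on `(-∞,0)` and on `(0,∞)`
    (hWN : ∀ (x : EuclideanSpace ℝ (Fin N)) (s₁ s₂ : ℝ),
      s₁ ≤ s₂ → (s₂ < 0 ∨ 0 < s₁) → f x s₁ / |s₁| ≤ f x s₂ / |s₂|)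
    -- the energy functional `Φ` and its derivative `Φ'`
    (Φ : E → ℝ) (Φ' : E → E →L[ℝ] ℝ)
    (hΦ : ∀ u, Φ u = (1/2) * (∫ x, (‖grad u x‖ ^ 2 + (V₀ x + V₁ x) * (ι u x) ^ 2))
        - ∫ x, Fint f x (ι u x))
    (hΦ'd : ∀ u, HasFDerivAt Φ (Φ' u) u)
    (hΦ'eq : ∀ u v, Φ' u v =
      (∫ x, (⟪grad u x, grad v x⟫ + (V₀ x + V₁ x) * (ι u x * ι v x)))
        - ∫ x, f x (ι u x) * ι v x)
    (hintF : ∀ u : E, Integrable (fun x => Fint f x (ι u x)))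
    (hintV : ∀ u : E, Integrable (fun x => (V₀ x + V₁ x) * (ι u x) ^ 2))
    (hintf : ∀ u v : E, Integrable (fun x => f x (ι u x) * ι v x))
    (hintV₁ : ∀ u : E, Integrable (fun x => V₁ x * (ι u x) ^ 2))
 :
    ∀ (u : E) (t : ℝ), 0 ≤ t →
      t ^ 2 / 2 * ‖u‖ ^ 2 - (∫ x, Fint f x (t * ι (Pp u) x))
        + (1 - t ^ 2) / 2 * Φ' u u + t ^ 2 * Φ' u (Pm u)
        + t ^ 2 / 2 * (∫ x, V₁ x * ((ι (Pp u) x) ^ 2 - (ι (Pm u) x) ^ 2)) ≤ Φ u := by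
  intro u t ht
  -- sign and continuity facts about `f`
  have hzero : ∀ x, f x 0 = 0 := by
    intro x
    obtain ⟨δ, hδ, hb⟩ := hF1 1 one_pos
    have := hb x 0 (by simp [hδ.le])
    simpa using this
  have hposf : ∀ x (s : ℝ), 0 < s → 0 ≤ f x s := by
    intro x s hs
    have hh : ∀ ε : ℝ, 0 < ε → -ε ≤ f x s / s := by
      intro ε hε
      obtain ⟨δ, hδ, hb⟩ := hF1 ε hε
      have hs' : 0 < min s δ := lt_min hs hδ
      have h1 := hWN x (min s δ) s (min_le_left _ _) (Or.inr hs')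
      rw [abs_of_pos hs', abs_of_pos hs] at h1
      have h2 := hb x (min s δ) (by rw [abs_of_pos hs']; exact min_le_right _ _)
      rw [abs_of_pos hs'] at h2
      have h3 : -ε ≤ f x (min s δ) / min s δ := by
        rw [le_div_iff₀ hs']
        have := (abs_le.mp h2).1
        linarith
      linarith
    have h0 : 0 ≤ f x s / s := by
      by_contra hcon
      push_neg at hcon
      have := hh (-(f x s / s) / 2) (by linarith)
      linarith
    have h4 := mul_nonneg h0 hs.le
    rwa [div_mul_cancel₀ _ hs.ne'] at h4
  have hnegf : ∀ x (s : ℝ), s < 0 → f x s ≤ 0 := by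
    intro x s hs
    have hh : ∀ ε : ℝ, 0 < ε → f x s / |s| ≤ ε := by
      intro ε hε
      obtain ⟨δ, hδ, hb⟩ := hF1 ε hε
      have hs' : max s (-δ) < 0 := max_lt hs (by linarith)
      have h1 := hWN x s (max s (-δ)) (le_max_left _ _) (Or.inl hs')
      have h2 := hb x (max s (-δ)) (by rw [abs_of_neg hs']; linarith [le_max_right s (-δ)])
      have h3 : f x (max s (-δ)) / |max s (-δ)| ≤ ε := by
        rw [div_le_iff₀ (abs_pos.mpr hs'.ne)]
        exact (abs_le.mp h2).2
      linarith
    have h0 : f x s / |s| ≤ 0 := by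
      by_contra hcon
      push_neg at hcon
      have := hh (f x s / |s| / 2) (by linarith)
      linarith
    have habs : 0 < |s| := abs_pos.mpr hs.ne
    have h4 := mul_nonpos_of_nonpos_of_nonneg h0 habs.le
    rwa [div_mul_cancel₀ _ habs.ne'] at h4
  have hfcx : ∀ x, Continuous (f x) := by
    intro x
    exact hfc.comp (Continuous.prodMk_right x)
  -- projection bookkeeping
  set m := Pm u with hm
  set q := Pp u with hq
  have hmm : Pm m = m := hPmId m (hPm u)
  have hqmz : Pp m = 0 := by
    have h := hPsum m
    rw [hmm] at h
    exact add_eq_left.mp h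
  have hqqq : Pp q = q := hPpId q (hPp u)
  have hmqz : Pm q = 0 := by
    have h := hPsum q
    rw [hqqq] at h
    exact add_eq_right.mp h
  have hsum : m + q = u := hPsum u
  have hux : ∀ x, ι u x = ι m x + ι q x := by
    intro x
    conv_lhs => rw [← hsum]
    rw [map_add]
    rfl
  have hqx : ∀ x, ι q x = ι u x - ι m x := by
    intro x; rw [hux x]; ring
  -- integrability toolkit
  have hIg : ∀ v : E, Integrable (fun x => ‖grad v x‖ ^ 2) := fun v => (hmemg v).integrable_sq
  have hIV₀ : ∀ v : E, Integrable (fun x => V₀ x * (ι v x) ^ 2) := by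
    intro v
    exact ((hintV v).sub (hintV₁ v)).congr
      (Filter.Eventually.of_forall fun x => by simp only [Pi.sub_apply]; ring)
  have hQI : ∀ v : E, Integrable (fun x => ‖grad v x‖ ^ 2 + V₀ x * (ι v x) ^ 2) :=
    fun v => (hIg v).add (hIV₀ v)
  -- the cross quadratic form
  have hcross_eq : (fun x => ⟪grad u x, grad m x⟫ + V₀ x * (ι u x * ι m x))
      = fun x => ((‖grad (u + m) x‖ ^ 2 + V₀ x * (ι (u + m) x) ^ 2)
          - (‖grad (u - m) x‖ ^ 2 + V₀ x * (ι (u - m) x) ^ 2)) / 4 := by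
    funext x
    have h1 : grad (u + m) x = grad u x + grad m x := by rw [map_add]; rfl
    have h2 : grad (u - m) x = grad u x - grad m x := by rw [map_sub]; rfl
    have h3 : ι (u + m) x = ι u x + ι m x := by rw [map_add]; rfl
    have h4 : ι (u - m) x = ι u x - ι m x := by rw [map_sub]; rfl
    rw [h1, h2, h3, h4, norm_add_sq_real, norm_sub_sq_real]
    ring
  have hIcross : Integrable (fun x => ⟪grad u x, grad m x⟫ + V₀ x * (ι u x * ι m x)) := by
    rw [hcross_eq]
    exact ((hQI (u + m)).sub (hQI (u - m))).div_const 4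
  have hnorm2m : ‖m + m‖ ^ 2 = 4 * ‖m‖ ^ 2 := by
    rw [← two_smul ℝ m, norm_smul]
    simp only [Real.norm_ofNat]
    ring
  have hBm : (∫ x, (⟪grad u x, grad m x⟫ + V₀ x * (ι u x * ι m x))) = -‖m‖ ^ 2 := by
    rw [hcross_eq, integral_div, integral_sub (hQI (u + m)) (hQI (u - m)), hform (u + m),
      hform (u - m)]
    have e1 : Pp (u + m) = q := by rw [map_add, ← hq, hqmz, add_zero]
    have e2 : Pm (u + m) = m + m := by rw [map_add, ← hm, hmm]
    have e3 : Pp (u - m) = q := by rw [map_sub, ← hq, hqmz, sub_zero]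
    have e4 : Pm (u - m) = 0 := by rw [map_sub, ← hm, hmm, sub_self]
    rw [e1, e2, e3, e4, hnorm2m, norm_zero]
    ring
  have hV₁cross_eq : (fun x => V₁ x * (ι u x * ι m x))
      = fun x => (V₁ x * (ι (u + m) x) ^ 2 - V₁ x * (ι (u - m) x) ^ 2) / 4 := by
    funext x
    have h3 : ι (u + m) x = ι u x + ι m x := by rw [map_add]; rfl
    have h4 : ι (u - m) x = ι u x - ι m x := by rw [map_sub]; rfl
    rw [h3, h4]
    ring
  have hIV₁um : Integrable (fun x => V₁ x * (ι u x * ι m x)) := by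
    rw [hV₁cross_eq]
    exact ((hintV₁ (u + m)).sub (hintV₁ (u - m))).div_const 4
  -- values of Φ and Φ'
  have hsplit1 : (∫ x, (‖grad u x‖ ^ 2 + (V₀ x + V₁ x) * (ι u x) ^ 2))
      = (‖q‖ ^ 2 - ‖m‖ ^ 2) + ∫ x, V₁ x * (ι u x) ^ 2 := by
    have e : (fun x => ‖grad u x‖ ^ 2 + (V₀ x + V₁ x) * (ι u x) ^ 2)
        = fun x => (‖grad u x‖ ^ 2 + V₀ x * (ι u x) ^ 2) + V₁ x * (ι u x) ^ 2 := by
      funext x; ring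
    rw [e, integral_add (hQI u) (hintV₁ u), hform u, ← hq, ← hm]
  have hPhiu : Φ u = 1 / 2 * ((‖q‖ ^ 2 - ‖m‖ ^ 2) + ∫ x, V₁ x * (ι u x) ^ 2)
      - ∫ x, Fint f x (ι u x) := by rw [hΦ u, hsplit1]
  have hsplitu : (∫ x, (⟪grad u x, grad u x⟫ + (V₀ x + V₁ x) * (ι u x * ι u x)))
      = (‖q‖ ^ 2 - ‖m‖ ^ 2) + ∫ x, V₁ x * (ι u x) ^ 2 := by
    have e : (fun x => ⟪grad u x, grad u x⟫ + (V₀ x + V₁ x) * (ι u x * ι u x))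
        = fun x => (‖grad u x‖ ^ 2 + V₀ x * (ι u x) ^ 2) + V₁ x * (ι u x) ^ 2 := by
      funext x; rw [real_inner_self_eq_norm_sq]; ring
    rw [e, integral_add (hQI u) (hintV₁ u), hform u, ← hq, ← hm]
  have hphiuu : Φ' u u = ((‖q‖ ^ 2 - ‖m‖ ^ 2) + ∫ x, V₁ x * (ι u x) ^ 2)
      - ∫ x, f x (ι u x) * ι u x := by rw [hΦ'eq u u, hsplitu]
  have hsplitm : (∫ x, (⟪grad u x, grad m x⟫ + (V₀ x + V₁ x) * (ι u x * ι m x)))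
      = -‖m‖ ^ 2 + ∫ x, V₁ x * (ι u x * ι m x) := by
    have e : (fun x => ⟪grad u x, grad m x⟫ + (V₀ x + V₁ x) * (ι u x * ι m x))
        = fun x => (⟪grad u x, grad m x⟫ + V₀ x * (ι u x * ι m x)) + V₁ x * (ι u x * ι m x) := by
      funext x; ring
    rw [e, integral_add hIcross hIV₁um, hBm]
  have hphium : Φ' u m = (-‖m‖ ^ 2 + ∫ x, V₁ x * (ι u x * ι m x))
      - ∫ x, f x (ι u x) * ι m x := by rw [hΦ'eq u m, hsplitm]
  have hnormu : ‖u‖ ^ 2 = ‖m‖ ^ 2 + ‖q‖ ^ 2 := by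
    have hmq : ⟪m, q⟫ = 0 := horth m (hPm u) q (hPp u)
    rw [← hsum, norm_add_sq_real, hmq]
    ring
  have hW : (∫ x, V₁ x * ((ι q x) ^ 2 - (ι m x) ^ 2))
      = (∫ x, V₁ x * (ι u x) ^ 2) - 2 * ∫ x, V₁ x * (ι u x * ι m x) := by
    have e : (fun x => V₁ x * ((ι q x) ^ 2 - (ι m x) ^ 2))
        = fun x => V₁ x * (ι u x) ^ 2 - 2 * (V₁ x * (ι u x * ι m x)) := by
      funext x; rw [hqx x]; ring
    rw [e, integral_sub (hintV₁ u) ((hIV₁um).const_mul 2), integral_const_mul]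
  -- the nonlinear part
  have hItp : Integrable (fun x => Fint f x (t * ι q x)) := by
    have he : (fun x => Fint f x (ι (t • q) x)) = fun x => Fint f x (t * ι q x) := by
      funext x
      congr 1
      rw [LinearMap.map_smul]
      rfl
    rw [← he]
    exact hintF (t • q)
  have hS : 0 ≤ ∫ x, (Fint f x (t * ι q x) - Fint f x (ι u x)
      + (1 - t ^ 2) / 2 * (f x (ι u x) * ι u x) + t ^ 2 * (f x (ι u x) * ι m x)) := by
    apply integral_nonneg
    intro x
    have hkey := key_pointwise (g := f x) (hfcx x) (hzero x) (hposf x) (hnegf x) (hWN x)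
      t (t * ι q x) (ι u x) ht
    have hwk : ((t ^ 2 + 1) / 2 * (ι u x) - t * (t * ι q x)) * f x (ι u x)
        = (1 - t ^ 2) / 2 * (f x (ι u x) * ι u x) + t ^ 2 * (f x (ι u x) * ι m x) := by
      rw [hqx x]; ring
    simp only [Pi.zero_apply, Fint]
    nlinarith [hkey, hwk]
  have hSsplit : (∫ x, (Fint f x (t * ι q x) - Fint f x (ι u x)
      + (1 - t ^ 2) / 2 * (f x (ι u x) * ι u x) + t ^ 2 * (f x (ι u x) * ι m x)))
      = (∫ x, Fint f x (t * ι q x)) - (∫ x, Fint f x (ι u x))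
        + (1 - t ^ 2) / 2 * (∫ x, f x (ι u x) * ι u x)
        + t ^ 2 * (∫ x, f x (ι u x) * ι m x) := by
    have i1 : Integrable (fun x => Fint f x (t * ι q x) - Fint f x (ι u x)) volume :=
      hItp.sub (hintF u)
    have i2 : Integrable (fun x => (1 - t ^ 2) / 2 * (f x (ι u x) * ι u x)) volume :=
      (hintf u u).const_mul _
    have i3 : Integrable (fun x => t ^ 2 * (f x (ι u x) * ι m x)) volume :=
      (hintf u m).const_mul _
    have i12 : Integrable (fun x => Fint f x (t * ι q x) - Fint f x (ι u x)
        + (1 - t ^ 2) / 2 * (f x (ι u x) * ι u x)) volume := i1.add i2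
    rw [integral_add i12 i3, integral_add i1 i2,
      integral_sub hItp (hintF u), integral_const_mul, integral_const_mul]
  have h8 : 0 ≤ (∫ x, Fint f x (t * ι q x)) - (∫ x, Fint f x (ι u x))
      + (1 - t ^ 2) / 2 * (∫ x, f x (ι u x) * ι u x)
      + t ^ 2 * (∫ x, f x (ι u x) * ι m x) := hSsplit ▸ hS
  rw [hPhiu, hphiuu, hphium, hnormu, hW]
  nlinarith [h8]
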